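/- Let φ be a flow on a finite-dimensional normed real vector space X and x ∈ X. Then x is a fixed point of φ if and only if for every ε > 0 there exists x̃ ∈ X such that ‖φ(t, x̃) − x‖ < ε for all 0 ≤ t ≤ 1/ε. -/
import Mathlib


/-- Let `φ` be a flow on a finite-dimensional normed real space `X` and
`x ∈ X`. Then `x` is a fixed point of `φ` iff for every `ε > 0` there is `x̃` with
`‖φ(t, x̃) - x‖ < ε` for all `0 ≤ t ≤ 1/ε`. -/
theorem stmt4 {X : Type*} [NormedAddCommGroup X] [NormedSpace ℝ X] [FiniteDimensional ℝ X]
    (φ : ℝ → X → X)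
    (hcont : Continuous fun p : ℝ × X => φ p.1 p.2)
    (hzero : ∀ x, φ 0 x = x)
    (hgroup : ∀ t s x, φ t (φ s x) = φ (t + s) x)
    (x : X) :
    (∀ t : ℝ, φ t x = x) ↔
      (∀ ε : ℝ, 0 < ε → ∃ x' : X, ∀ t : ℝ, 0 ≤ t → t ≤ ε⁻¹ → ‖φ t x' - x‖ < ε) := by
  constructor
  · intro h ε hε
    exact ⟨x, fun t _ _ => by simpa [h t] using hε⟩
  · intro h
    have key : ∀ t : ℝ, 0 ≤ t → φ t x = x := by
      intro t ht
      set c := max t 1 with hc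
      have hc1 : (1 : ℝ) ≤ c := le_max_right _ _
      have hc0 : (0 : ℝ) < c := lt_of_lt_of_le one_pos hc1
      set ε : ℕ → ℝ := fun n => (c * (n + 1))⁻¹ with hεdef
      have hεpos : ∀ n, 0 < ε n := fun n => by positivity
      have hinv : ∀ n : ℕ, t ≤ (ε n)⁻¹ := by
        intro n
        rw [hεdef]
        simp only [inv_inv]
        calc t ≤ c := le_max_left _ _
          _ = c * 1 := (mul_one c).symm
          _ ≤ c * (n + 1) := by nlinarith [Nat.cast_nonneg (α := ℝ) n]
      choose x' hx' using fun n => h (ε n) (hεpos n)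
      have hεlim : Filter.Tendsto ε Filter.atTop (nhds 0) := by
        apply tendsto_inv_atTop_zero.comp
        apply Filter.Tendsto.const_mul_atTop hc0
        exact Filter.tendsto_atTop_add_const_right _ 1 tendsto_natCast_atTop_atTop
      have h0 : ∀ n, ‖x' n - x‖ ≤ ε n := by
        intro n
        have := hx' n 0 le_rfl (by positivity)
        rw [hzero] at this
        exact this.le
      have hT : ∀ n, ‖φ t (x' n) - x‖ ≤ ε n := fun n => (hx' n t ht (hinv n)).le
      have h1 : Filter.Tendsto x' Filter.atTop (nhds x) := by
        rw [tendsto_iff_norm_sub_tendsto_zero]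
        exact squeeze_zero (fun n => norm_nonneg _) h0 hεlim
      have h2 : Filter.Tendsto (fun n => φ t (x' n)) Filter.atTop (nhds x) := by
        rw [tendsto_iff_norm_sub_tendsto_zero]
        exact squeeze_zero (fun n => norm_nonneg _) hT hεlim
      have hφt : Continuous (φ t) := hcont.comp (Continuous.prodMk_right t)
      have h3 : Filter.Tendsto (fun n => φ t (x' n)) Filter.atTop (nhds (φ t x)) :=
        (hφt.continuousAt.tendsto).comp h1
      exact tendsto_nhds_unique h3 h2
    intro t
    rcases le_or_gt 0 t with ht | ht
    · exact key t ht
    · have := key (-t) (by linarith)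
      calc φ t x = φ t (φ (-t) x) := by rw [this]
        _ = φ (t + -t) x := hgroup t (-t) x
        _ = x := by rw [add_neg_cancel, hzero]
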